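/- Let P_X be an m_X × n matrix and P_Z an m_Z × n matrix over 𝔽₂ with P_X · P_Zᵀ = 0, and set H₀ = ker(P_X)/im(P_Zᵀ), H₀* = ker(P_Z)/im(P_Xᵀ), with the induced pairing ([u],[w]) ↦ u·w. Then for every basis ([u₁],…,[u_k]) of H₀ there exists a unique basis ([w₁],…,[w_k]) of H₀* such that [uᵢ]·[wⱼ] = δᵢⱼ for all i, j. In particular dim H₀ = dim H₀*. -/

import Mathlib

abbrev F2 := ZMod 2

open Matrix

section Aux

variable {n p q : ℕ}

/-- dot product as a bilinear map -/
noncomputable def dotBil : (Fin n → F2) →ₗ[F2] (Fin n → F2) →ₗ[F2] F2 :=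
  LinearMap.mk₂ F2 (· ⬝ᵥ ·) add_dotProduct smul_dotProduct
    dotProduct_add dotProduct_smul

variable (A : Matrix (Fin p) (Fin n) F2) (B : Matrix (Fin q) (Fin n) F2)

abbrev Qspace : Type _ :=
  LinearMap.ker A.mulVecLin ⧸
    ((LinearMap.range B.transpose.mulVecLin).comap
      (LinearMap.ker A.mulVecLin).subtype :
      Submodule F2 (LinearMap.ker A.mulVecLin))

noncomputable def innerMap (w : LinearMap.ker B.mulVecLin) :
    Module.Dual F2 (Qspace A B) :=
  Submodule.liftQ _ ((dotBil.flip w.1) ∘ₗ (LinearMap.ker A.mulVecLin).subtype) (by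
    rintro ⟨u, hu⟩ ⟨v, hv⟩
    have hw : B.mulVec w.1 = 0 := w.2
    simp only [LinearMap.mem_ker, LinearMap.comp_apply, Submodule.subtype_apply,
      dotBil, LinearMap.flip_apply, LinearMap.mk₂_apply]
    have : (B.transpose.mulVec v) ⬝ᵥ w.1 = v ⬝ᵥ B.mulVec w.1 := by
      rw [Matrix.dotProduct_mulVec, ← Matrix.vecMul_transpose, Matrix.transpose_transpose]
    have hv' : B.transpose.mulVec v = u := hv
    simp [← hv', this, hw])

lemma innerMap_apply (w : LinearMap.ker B.mulVecLin) (a : LinearMap.ker A.mulVecLin) :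
    innerMap A B w (Submodule.Quotient.mk a) = a.1 ⬝ᵥ w.1 := rfl

noncomputable def toDual : Qspace B A →ₗ[F2] Module.Dual F2 (Qspace A B) :=
  Submodule.liftQ _
    { toFun := innerMap A B
      map_add' := by
        intro w₁ w₂
        apply LinearMap.ext
        intro x
        induction x using Submodule.Quotient.induction_on with
        | _ a => simp [innerMap_apply, dotProduct_add]
      map_smul' := by
        intro c w
        apply LinearMap.ext
        intro x
        induction x using Submodule.Quotient.induction_on with
        | _ a => simp [innerMap_apply, dotProduct_smul] }
    (by
      rintro ⟨w, hw⟩ hmem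
      obtain ⟨v, hv⟩ : w ∈ LinearMap.range A.transpose.mulVecLin := hmem
      apply LinearMap.ext
      intro x
      induction x using Submodule.Quotient.induction_on with
      | _ a =>
        obtain ⟨a, ha⟩ := a
        have ha' : A.mulVec a = 0 := ha
        show innerMap A B ⟨w, hw⟩ (Submodule.Quotient.mk ⟨a, ha⟩) = 0
        rw [innerMap_apply]
        have hv' : A.transpose.mulVec v = w := hv
        show a ⬝ᵥ w = 0
        rw [← hv', Matrix.dotProduct_mulVec, Matrix.vecMul_transpose, ha',
          zero_dotProduct])

lemma toDual_apply (a : LinearMap.ker A.mulVecLin) (b : LinearMap.ker B.mulVecLin) :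
    toDual A B (Submodule.Quotient.mk b) (Submodule.Quotient.mk a) = a.1 ⬝ᵥ b.1 := rfl

lemma toDual_surjective (hAB : A * B.transpose = 0) :
    Function.Surjective (toDual A B) := by
  intro f
  set g : LinearMap.ker A.mulVecLin →ₗ[F2] F2 :=
    f ∘ₗ Submodule.mkQ ((LinearMap.range B.transpose.mulVecLin).comap
      (LinearMap.ker A.mulVecLin).subtype) with hg
  obtain ⟨h, hh⟩ := g.exists_extend
  set w : Fin n → F2 := fun i => h (Pi.single i 1) with hwdef
  have hw : ∀ u : Fin n → F2, h u = u ⬝ᵥ w := by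
    intro u
    have hu : u = ∑ i, u i • Pi.single i (1 : F2) := by
      ext j
      simp [Pi.single_apply, Finset.sum_ite_eq]
    rw [hu]
    simp only [map_sum, LinearMap.map_smul]
    simp [dotProduct, hwdef, smul_eq_mul, Finset.sum_apply,
      Pi.single_apply, Finset.mul_sum, mul_ite]
  have hrow : ∀ j : Fin q, (fun i => B j i) ∈ LinearMap.ker A.mulVecLin ∧
      (fun i => B j i) ∈ LinearMap.range B.transpose.mulVecLin := by
    intro j
    have hBj : B.transpose.mulVec (Pi.single j 1) = fun i => B j i := by
      ext i
      simp [Matrix.mulVec, dotProduct, Pi.single_apply]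
    constructor
    · have : A.mulVec (fun i => B j i) = 0 := by
        rw [← hBj, Matrix.mulVec_mulVec, hAB, Matrix.zero_mulVec]
      exact this
    · exact ⟨Pi.single j 1, hBj⟩
  have hwker : w ∈ LinearMap.ker B.mulVecLin := by
    have : B.mulVec w = 0 := by
      ext j
      have h1 : B.mulVec w j = (fun i => B j i) ⬝ᵥ w := rfl
      rw [h1, ← hw]
      have h2 : h (fun i => B j i) = g ⟨_, (hrow j).1⟩ := by
        rw [← hh]; rfl
      rw [h2, hg]
      have h3 : (Submodule.mkQ ((LinearMap.range B.transpose.mulVecLin).comap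
          (LinearMap.ker A.mulVecLin).subtype)) (⟨(fun i => B j i), (hrow j).1⟩ :
          LinearMap.ker A.mulVecLin) = 0 := by
        rw [Submodule.mkQ_apply, Submodule.Quotient.mk_eq_zero]
        exact (hrow j).2
      simp only [LinearMap.comp_apply, h3, map_zero, Pi.zero_apply]
    exact this
  refine ⟨Submodule.Quotient.mk ⟨w, hwker⟩, ?_⟩
  apply LinearMap.ext
  intro x
  induction x using Submodule.Quotient.induction_on with
  | _ a =>
    rw [toDual_apply, ← hw]
    have : h a.1 = g a := by rw [← hh]; rfl
    rw [this, hg]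
    rfl

end Aux

section Main

variable {n p q : ℕ} (A : Matrix (Fin p) (Fin n) F2) (B : Matrix (Fin q) (Fin n) F2)

lemma finrank_qspace_eq (hAB : A * B.transpose = 0) (hBA : B * A.transpose = 0) :
    Module.finrank F2 (Qspace A B) = Module.finrank F2 (Qspace B A) := by
  have h1 : Module.finrank F2 (Module.Dual F2 (Qspace A B)) ≤
      Module.finrank F2 (Qspace B A) := by
    have := LinearMap.finrank_range_le (toDual A B)
    rwa [LinearMap.range_eq_top.mpr (toDual_surjective A B hAB), finrank_top] at this
  have h2 : Module.finrank F2 (Module.Dual F2 (Qspace B A)) ≤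
      Module.finrank F2 (Qspace A B) := by
    have := LinearMap.finrank_range_le (toDual B A)
    rwa [LinearMap.range_eq_top.mpr (toDual_surjective B A hBA), finrank_top] at this
  rw [Subspace.dual_finrank_eq] at h1 h2
  omega

end Main

theorem css_dual_basis
    (n mX mZ : ℕ)
    (PX : Matrix (Fin mX) (Fin n) F2) (PZ : Matrix (Fin mZ) (Fin n) F2)
    (hcomm : PX * PZ.transpose = 0) :
    (∀ (k : ℕ)
      (u : Module.Basis (Fin k) F2
        (LinearMap.ker PX.mulVecLin ⧸
          ((LinearMap.range PZ.transpose.mulVecLin).comap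
            (LinearMap.ker PX.mulVecLin).subtype :
            Submodule F2 (LinearMap.ker PX.mulVecLin)))),
      ∃! w : Module.Basis (Fin k) F2
        (LinearMap.ker PZ.mulVecLin ⧸
          ((LinearMap.range PX.transpose.mulVecLin).comap
            (LinearMap.ker PZ.mulVecLin).subtype :
            Submodule F2 (LinearMap.ker PZ.mulVecLin))),
        ∀ (i j : Fin k) (a : LinearMap.ker PX.mulVecLin) (b : LinearMap.ker PZ.mulVecLin),
          Submodule.Quotient.mk a = u i → Submodule.Quotient.mk b = w j →
          ∑ l, (a : Fin n → F2) l * (b : Fin n → F2) l = if i = j then 1 else 0) ∧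
    Module.finrank F2
        (LinearMap.ker PX.mulVecLin ⧸
          ((LinearMap.range PZ.transpose.mulVecLin).comap
            (LinearMap.ker PX.mulVecLin).subtype :
            Submodule F2 (LinearMap.ker PX.mulVecLin))) =
      Module.finrank F2
        (LinearMap.ker PZ.mulVecLin ⧸
          ((LinearMap.range PX.transpose.mulVecLin).comap
            (LinearMap.ker PZ.mulVecLin).subtype :
            Submodule F2 (LinearMap.ker PZ.mulVecLin))) := by
  have hBA : PZ * PX.transpose = 0 := by
    have := congrArg Matrix.transpose hcomm
    simpa [Matrix.transpose_mul] using this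
  have hdim := finrank_qspace_eq PX PZ hcomm hBA
  refine ⟨?_, hdim⟩
  intro k u
  have hsurj := toDual_surjective PX PZ hcomm
  have hinj : Function.Injective (toDual PX PZ) := by
    have hr : Module.finrank F2 (Qspace PZ PX) =
        Module.finrank F2 (Module.Dual F2 (Qspace PX PZ)) := by
      rw [Subspace.dual_finrank_eq, hdim]
    exact (LinearMap.injective_iff_surjective_of_finrank_eq_finrank hr).mpr hsurj
  let e : Qspace PZ PX ≃ₗ[F2] Module.Dual F2 (Qspace PX PZ) :=
    LinearEquiv.ofBijective (toDual PX PZ) ⟨hinj, hsurj⟩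
  let w : Module.Basis (Fin k) F2 (Qspace PZ PX) := u.dualBasis.map e.symm
  have hwj : ∀ j : Fin k, toDual PX PZ (w j) = u.dualBasis j := by
    intro j
    show e (w j) = u.dualBasis j
    simp [w, Module.Basis.map_apply]
  refine ⟨w, ?_, ?_⟩
  · intro i j a b ha hb
    have hdot : ∑ l, (a : Fin n → F2) l * (b : Fin n → F2) l = a.1 ⬝ᵥ b.1 := rfl
    have h2 : a.1 ⬝ᵥ b.1 = toDual PX PZ (w j) (u i) := by
      rw [← ha, ← hb, toDual_apply]
    rw [hdot, h2, hwj, Module.Basis.dualBasis_apply_self]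
  · intro w' hw'
    apply DFunLike.ext
    intro j
    have hj : toDual PX PZ (w' j) = u.dualBasis j := by
      apply u.ext
      intro i
      obtain ⟨a, ha⟩ := Submodule.Quotient.mk_surjective _ (u i)
      obtain ⟨b, hb⟩ := Submodule.Quotient.mk_surjective _ (w' j)
      have := hw' i j a b ha hb
      rw [Module.Basis.dualBasis_apply_self, ← ha, ← hb, toDual_apply]
      exact this
    exact e.injective (by
      show toDual PX PZ (w' j) = toDual PX PZ (w j)
      rw [hj, hwj])
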